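/- For every character α of the symmetric hypergroup, there exists exactly one α-mean on ℓ∞(ℕ₀) if and only if α ≠ 1; i.e. the symmetric hypergroup ℕ₀ is α-amenable with a unique α-mean precisely for the nontrivial characters α. -/

import Mathlib

open Filter Topology

noncomputable section

/-- `Tf` is the translate by `n` of `f` in the symmetric hypergroup on `ℕ₀`
with parameters `b`, `c`:  `(T_n f)(k) = f(max n k)` for `k ≠ n`,
`T_0 f = f`, and `(T_n f)(n) = Σ_{k<n} (c_k/c_n) f(k) + (1 - b_n) f(n)`
for `n ≥ 1`. -/
def IsSymTranslate (b c : ℕ → ℝ) (n : ℕ)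
    (f Tf : BoundedContinuousFunction ℕ ℝ) : Prop :=
  (∀ k : ℕ, k ≠ n → Tf k = f (max n k)) ∧
  (n = 0 → Tf 0 = f 0) ∧
  (1 ≤ n → Tf n = (∑ k ∈ Finset.range n, (c k / c n) * f k) + (1 - b n) * f n)

/-- A character of the symmetric hypergroup: a bounded function `α : ℕ → ℝ`,
not identically `0`, with `α(max n k) = α(n)α(k)` for `n ≠ k` and
`Σ_{k<n} (c_k/c_n) α(k) + (1 - b_n) α(n) = α(n)²` for `n ≥ 1`. -/
def IsSymCharacter (b c : ℕ → ℝ) (α : BoundedContinuousFunction ℕ ℝ) : Prop :=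
  α ≠ 0 ∧
  (∀ n k : ℕ, n ≠ k → α (max n k) = α n * α k) ∧
  ∀ n : ℕ, 1 ≤ n →
    (∑ k ∈ Finset.range n, (c k / c n) * α k) + (1 - b n) * α n = (α n) ^ 2

/-- `m` is an `α`-mean on `ℓ∞(ℕ₀)` for the symmetric hypergroup:
`m(α) = 1` and `m(T_n f) = α(n) m(f)` for all `n` and bounded `f`. -/
def IsSymMean (b c : ℕ → ℝ) (α : BoundedContinuousFunction ℕ ℝ)
    (m : BoundedContinuousFunction ℕ ℝ →L[ℝ] ℝ) : Prop :=
  m α = 1 ∧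
    ∀ (n : ℕ) (f Tf : BoundedContinuousFunction ℕ ℝ),
      IsSymTranslate b c n f Tf → m Tf = α n * m f

namespace Stmt16Aux

/-- indicator function as a bounded continuous function on ℕ -/
def ind (p : ℕ → Prop) [DecidablePred p] : BoundedContinuousFunction ℕ ℝ :=
  ⟨⟨fun k => if p k then 1 else 0, continuous_of_discreteTopology⟩, 1, by
    intro x y
    simp only [ContinuousMap.coe_mk, Real.dist_eq]
    split <;> split <;> norm_num⟩

@[simp] lemma ind_apply (p : ℕ → Prop) [DecidablePred p] (k : ℕ) :
    ind p k = if p k then 1 else 0 := rfl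

lemma exists_tendsto (U : Ultrafilter ℕ) (f : BoundedContinuousFunction ℕ ℝ) :
    ∃ L ∈ Set.Icc (-‖f‖) ‖f‖, Tendsto f U (𝓝 L) := by
  have h : ↑(U.map f) ≤ Filter.principal (Set.Icc (-‖f‖) ‖f‖) := by
    rw [le_principal_iff, Ultrafilter.coe_map, mem_map]
    refine Filter.mem_of_superset Filter.univ_mem ?_
    rintro k -
    have := f.norm_coe_le_norm k
    exact ⟨(abs_le.1 this).1, (abs_le.1 this).2⟩
  obtain ⟨a, ha, hle⟩ := isCompact_Icc.ultrafilter_le_nhds (U.map f) h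
  exact ⟨a, ha, hle⟩

def uLim (U : Ultrafilter ℕ) (f : BoundedContinuousFunction ℕ ℝ) : ℝ :=
  (exists_tendsto U f).choose

lemma uLim_mem (U : Ultrafilter ℕ) (f : BoundedContinuousFunction ℕ ℝ) :
    uLim U f ∈ Set.Icc (-‖f‖) ‖f‖ := (exists_tendsto U f).choose_spec.1

lemma uLim_tendsto (U : Ultrafilter ℕ) (f : BoundedContinuousFunction ℕ ℝ) :
    Tendsto f U (𝓝 (uLim U f)) := (exists_tendsto U f).choose_spec.2

lemma uLim_eq {U : Ultrafilter ℕ} {f : BoundedContinuousFunction ℕ ℝ} {L : ℝ}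
    (h : Tendsto f U (𝓝 L)) : uLim U f = L :=
  tendsto_nhds_unique (uLim_tendsto U f) h

/-- limit along an ultrafilter, as a continuous linear functional -/
def uMean (U : Ultrafilter ℕ) : BoundedContinuousFunction ℕ ℝ →L[ℝ] ℝ :=
  LinearMap.mkContinuous
    { toFun := uLim U
      map_add' := fun f g => uLim_eq (by
        have := (uLim_tendsto U f).add (uLim_tendsto U g)
        refine this.congr fun k => ?_
        simp)
      map_smul' := fun r f => uLim_eq (by
        have := (uLim_tendsto U f).const_mul r
        refine this.congr fun k => ?_
        simp [mul_comm]) }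
    1 (fun f => by
      have h := uLim_mem U f
      simp only [LinearMap.coe_mk, AddHom.coe_mk, one_mul, Real.norm_eq_abs]
      exact abs_le.2 ⟨h.1, h.2⟩)

lemma uMean_apply (U : Ultrafilter ℕ) (f : BoundedContinuousFunction ℕ ℝ) :
    uMean U f = uLim U f := rfl

lemma exists_ultra {s : Set ℕ} (hs : s.Infinite) :
    ∃ U : Ultrafilter ℕ, s ∈ U ∧ (↑U : Filter ℕ) ≤ cofinite := by
  have : (cofinite ⊓ 𝓟 s).NeBot := hs.cofinite_inf_principal_neBot
  refine ⟨Ultrafilter.of (cofinite ⊓ 𝓟 s), ?_, ?_⟩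
  · exact le_principal_iff.mp ((Ultrafilter.of_le _).trans inf_le_right)
  · exact (Ultrafilter.of_le _).trans inf_le_left

lemma uMean_isMean (b c : ℕ → ℝ) {U : Ultrafilter ℕ}
    (hU : (↑U : Filter ℕ) ≤ cofinite) :
    IsSymMean b c 1 (uMean U) := by
  constructor
  · rw [uMean_apply]
    refine uLim_eq ?_
    have : ⇑(1 : BoundedContinuousFunction ℕ ℝ) = fun _ => (1 : ℝ) := by
      ext k; simp
    rw [this]
    exact tendsto_const_nhds
  · intro n f Tf hT
    have h1 : (1 : BoundedContinuousFunction ℕ ℝ) n = 1 := rfl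
    rw [h1, one_mul, uMean_apply, uMean_apply]
    refine uLim_eq ((uLim_tendsto U f).congr' ?_)
    have hmem : {k : ℕ | n < k} ∈ (↑U : Filter ℕ) := by
      apply hU
      rw [mem_cofinite]
      have : {k : ℕ | n < k}ᶜ = Set.Iic n := by
        ext k; simp [Set.mem_Iic, Nat.not_lt] -- may need tweaks
      rw [this]
      exact Set.finite_Iic n
    filter_upwards [hmem] with k hk
    have := hT.1 k (by omega)
    rw [this, max_eq_right (le_of_lt hk)]

end Stmt16Aux

open Stmt16Aux

theorem stmt16    (b c : ℕ → ℝ)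
    (hb : ∀ n : ℕ, 1 ≤ n → b n ∈ Set.Ioc (0 : ℝ) 1)
    (hc0 : c 0 = 1)
    (hcrec : ∀ n : ℕ, 1 ≤ n → c n = (1 / b n) * ∑ k ∈ Finset.range n, c k)
    (α : BoundedContinuousFunction ℕ ℝ)
    (hα : IsSymCharacter b c α) :
    (∃! m : BoundedContinuousFunction ℕ ℝ →L[ℝ] ℝ, IsSymMean b c α m) ↔ α ≠ 1 := by
  constructor
  · rintro ⟨m, hm, hu⟩ h1
    subst h1
    have heven : ({k : ℕ | Even k}).Infinite := by
      refine Set.infinite_of_injective_forall_mem (f := fun n : ℕ => 2 * n) ?_ ?_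
      · intro a b' h; simpa using h
      · intro a; exact ⟨a, two_mul a⟩
    have hodd : ({k : ℕ | ¬ Even k}).Infinite := by
      refine Set.infinite_of_injective_forall_mem (f := fun n : ℕ => 2 * n + 1) ?_ ?_
      · intro a b' h; simpa using h
      · intro a; simp [Nat.even_add_one, parity_simps]
    obtain ⟨Ue, hse, hue⟩ := exists_ultra heven
    obtain ⟨Uo, hso, huo⟩ := exists_ultra hodd
    have he := hu (uMean Ue) (uMean_isMean b c hue)
    have ho := hu (uMean Uo) (uMean_isMean b c huo)
    have heq : uMean Ue = uMean Uo := he.trans ho.symm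
    have h1 : uMean Ue (ind Even) = 1 := by
      rw [uMean_apply]
      refine uLim_eq (Tendsto.congr' ?_ (tendsto_const_nhds : Tendsto (fun _ : ℕ => (1:ℝ)) ↑Ue (𝓝 1)))
      filter_upwards [hse] with k hk
      simp [hk]
    have h0 : uMean Uo (ind Even) = 0 := by
      rw [uMean_apply]
      refine uLim_eq (Tendsto.congr' ?_ (tendsto_const_nhds : Tendsto (fun _ : ℕ => (0:ℝ)) ↑Uo (𝓝 0)))
      filter_upwards [hso] with k hk
      simp [hk]
    rw [heq, h0] at h1
    exact zero_ne_one h1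
  · intro hne
    obtain ⟨hα0ne, hmul, hquad⟩ := hα
    have hbpos : ∀ n, 1 ≤ n → 0 < b n := fun n hn => (hb n hn).1
    have hcpos : ∀ n, 0 < c n := by
      intro n
      induction n using Nat.strong_induction_on with
      | _ n ih =>
        rcases Nat.eq_zero_or_pos n with h | h
        · rw [h, hc0]; norm_num
        · rw [hcrec n h]
          have hb' := hbpos n h
          have hsum : 0 < ∑ k ∈ Finset.range n, c k :=
            Finset.sum_pos (fun k hk => ih k (Finset.mem_range.1 hk))
              ⟨0, Finset.mem_range.2 h⟩
          positivity
    have hcs : ∀ n, 1 ≤ n → ∑ k ∈ Finset.range n, c k = b n * c n := by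
      intro n hn
      rw [hcrec n hn]
      have := (hbpos n hn).ne'
      field_simp
    have hα0 : α 0 = 1 := by
      by_cases hex : ∃ n, 1 ≤ n ∧ α n ≠ 0
      · obtain ⟨n, hn, hne0⟩ := hex
        have h := hmul n 0 (by omega)
        rw [max_eq_left (Nat.zero_le n)] at h
        have h2 : α n * α 0 = α n * 1 := by rw [← h, mul_one]
        exact mul_left_cancel₀ hne0 h2
      · push_neg at hex
        exfalso
        have h1 := hquad 1 le_rfl
        rw [Finset.sum_range_one, hex 1 le_rfl] at h1
        have hc1 := (hcpos 1).ne'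
        have hα00 : α 0 = 0 := by
          have h2 : (c 0 / c 1) * α 0 = 0 := by
            rw [hc0] at h1 ⊢
            nlinarith [h1]
          rw [hc0] at h2
          rcases mul_eq_zero.1 h2 with h3 | h3
          · exact absurd h3 (by positivity)
          · exact h3
        apply hα0ne
        ext k
        rcases Nat.eq_zero_or_pos k with h | h
        · rw [h]; simpa using hα00
        · simpa using hex k h
    have hzero : ∃ n, α n = 0 := by
      by_contra h
      push_neg at h
      apply hne
      ext k
      have hk := hmul k (k + 1) (by omega)
      rw [max_eq_right (Nat.le_succ k)] at hk
      have h2 : α k * α (k + 1) = 1 * α (k + 1) := by rw [← hk, one_mul]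
      have := mul_right_cancel₀ (h (k + 1)) h2
      simpa using this
    have hM : α (Nat.find hzero) = 0 := Nat.find_spec hzero
    have hMmin : ∀ k, k < Nat.find hzero → α k ≠ 0 := fun k hk => Nat.find_min hzero hk
    set M := Nat.find hzero with hMdef
    have hM1 : 1 ≤ M := by
      by_contra h
      have h0 : M = 0 := by omega
      rw [h0, hα0] at hM
      exact one_ne_zero hM
    obtain ⟨N, hMN⟩ : ∃ N, M = N + 1 := ⟨M - 1, by omega⟩
    have hαNne : α N ≠ 0 := hMmin N (by omega)
    have hαlt : ∀ k, k < N → α k = 1 := by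
      intro k hk
      have h := hmul k N (by omega)
      rw [max_eq_right hk.le] at h
      have h2 : α k * α N = 1 * α N := by rw [← h, one_mul]
      exact mul_right_cancel₀ hαNne h2
    have hαgt : ∀ k, N < k → α k = 0 := by
      intro k hk
      rcases eq_or_lt_of_le (show M ≤ k by omega) with h | h
      · rw [← h]; exact hM
      · have hmk := hmul M k (by omega)
        rw [max_eq_right h.le, hM, zero_mul] at hmk
        exact hmk
    have hsum0 : ∑ k ∈ Finset.range M, c k * α k = 0 := by
      have hq := hquad M hM1
      rw [hM] at hq
      have h2 : ∑ k ∈ Finset.range M, (c k / c M) * α k = 0 := by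
        nlinarith [hq]
      have h3 : ∑ k ∈ Finset.range M, (c k / c M) * α k
          = (∑ k ∈ Finset.range M, c k * α k) / c M := by
        rw [Finset.sum_div]
        exact Finset.sum_congr rfl fun k _ => by ring
      rw [h3, div_eq_zero_iff] at h2
      rcases h2 with h2 | h2
      · exact h2
      · exact absurd h2 (hcpos M).ne'
    have hN1 : 1 ≤ N := by
      by_contra h
      have hN0 : N = 0 := by omega
      rw [hMN, hN0, Finset.sum_range_one, hc0, hα0] at hsum0
      norm_num at hsum0
    have hαN : α N = -b N := by
      have h1 : ∑ k ∈ Finset.range M, c k * α k = b N * c N + c N * α N := by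
        rw [hMN, Finset.sum_range_succ, ← hcs N hN1]
        congr 1
        refine Finset.sum_congr rfl fun k hk => ?_
        rw [hαlt k (Finset.mem_range.1 hk), mul_one]
      rw [hsum0] at h1
      have hcN := (hcpos N).ne'
      have h2 : c N * α N = c N * (-b N) := by linarith
      exact mul_left_cancel₀ hcN h2
    have hchar : ∀ n, 1 ≤ n → n ≤ N → b n + (1 - b n) * α n = α n ^ 2 := by
      intro n h1 h2
      have hq := hquad n h1
      have hs : ∑ k ∈ Finset.range n, (c k / c n) * α k = b n := by
        have he : ∀ k ∈ Finset.range n, (c k / c n) * α k = c k / c n := by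
          intro k hk
          have hkN : k < N := lt_of_lt_of_le (Finset.mem_range.1 hk) h2
          rw [hαlt k hkN, mul_one]
        rw [Finset.sum_congr rfl he, ← Finset.sum_div, hcs n h1]
        have := (hcpos n).ne'
        field_simp
      rw [hs] at hq
      exact hq
    set K := ∑ k ∈ Finset.range (N + 1), c k * α k ^ 2 with hKdef
    have hKpos : 0 < K := by
      rw [hKdef]
      apply Finset.sum_pos'
      · intro k _
        have := (hcpos k).le
        positivity
      · exact ⟨0, Finset.mem_range.2 (by omega), by rw [hc0, hα0]; norm_num⟩
    have htot : ∑ k ∈ Finset.range (N + 1), c k * α k = 0 := by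
      rw [← hMN]; exact hsum0
    have hkey : ∀ (n : ℕ) (f Tf : BoundedContinuousFunction ℕ ℝ),
        IsSymTranslate b c n f Tf →
        ∑ k ∈ Finset.range (N + 1), c k * α k * Tf k
          = α n * ∑ k ∈ Finset.range (N + 1), c k * α k * f k := by
      intro n f Tf hT
      obtain ⟨hT1, hT2, hT3⟩ := hT
      rcases Nat.eq_zero_or_pos n with hn0 | hn1
      · subst hn0
        have hTf : ∀ k, Tf k = f k := by
          intro k
          rcases Nat.eq_zero_or_pos k with h | h
          · rw [h]; exact hT2 rfl
          · rw [hT1 k (by omega), max_eq_right (Nat.zero_le k)]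
        rw [hα0, one_mul]
        exact Finset.sum_congr rfl fun k _ => by rw [hTf k]
      rcases le_or_gt n N with hnN | hnN
      · have hsplit : ∀ g : ℕ → ℝ, ∑ k ∈ Finset.range (N + 1), g k
            = (∑ k ∈ Finset.range n, g k) + g n + ∑ k ∈ Finset.Ico (n + 1) (N + 1), g k := by
          intro g
          rw [Finset.range_eq_Ico,
            ← Finset.sum_Ico_consecutive g (Nat.zero_le (n + 1)) (by omega : n + 1 ≤ N + 1),
            Finset.sum_Ico_succ_top (Nat.zero_le n), ← Finset.range_eq_Ico]
        rw [hsplit (fun k => c k * α k * Tf k), hsplit (fun k => c k * α k * f k)]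
        set S := ∑ k ∈ Finset.range n, c k * f k with hS
        set C := ∑ k ∈ Finset.Ico (n + 1) (N + 1), c k * α k * f k with hCdef
        have hA : ∑ k ∈ Finset.range n, c k * α k * Tf k = b n * c n * f n := by
          have he : ∀ k ∈ Finset.range n, c k * α k * Tf k = c k * f n := by
            intro k hk
            have hk' := Finset.mem_range.1 hk
            rw [hαlt k (by omega), hT1 k (by omega), max_eq_left (by omega), mul_one]
          rw [Finset.sum_congr rfl he, ← Finset.sum_mul, hcs n hn1]
        have hA' : ∑ k ∈ Finset.range n, c k * α k * f k = S := by
          rw [hS]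
          refine Finset.sum_congr rfl fun k hk => ?_
          have hk' := Finset.mem_range.1 hk
          rw [hαlt k (by omega), mul_one]
        have hB : c n * α n * Tf n = α n * S + c n * α n * (1 - b n) * f n := by
          rw [hT3 hn1]
          have hdiv : ∑ j ∈ Finset.range n, (c j / c n) * f j = S / c n := by
            rw [hS, Finset.sum_div]
            exact Finset.sum_congr rfl fun k _ => by ring
          rw [hdiv]
          have := (hcpos n).ne'
          field_simp
        have hIco : ∑ k ∈ Finset.Ico (n + 1) (N + 1), c k * α k * Tf k = C := by
          rw [hCdef]
          refine Finset.sum_congr rfl fun k hk => ?_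
          obtain ⟨hk1, hk2⟩ := Finset.mem_Ico.1 hk
          rw [hT1 k (by omega), max_eq_right (by omega)]
        have hC : C = α n * C := by
          rcases eq_or_lt_of_le hnN with h | h
          · have : Finset.Ico (n + 1) (N + 1) = ∅ := by rw [h]; exact Finset.Ico_self _
            rw [hCdef, this, Finset.sum_empty, mul_zero]
          · rw [hαlt n h, one_mul]
        rw [hA, hA', hB, hIco]
        have hch := hchar n hn1 hnN
        linear_combination (c n * f n) * hch + hC
      · have hall : ∀ k ∈ Finset.range (N + 1), c k * α k * Tf k = c k * α k * f n := by
          intro k hk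
          have hk' := Finset.mem_range.1 hk
          rw [hT1 k (by omega), max_eq_left (by omega)]
        rw [Finset.sum_congr rfl hall, ← Finset.sum_mul, htot, zero_mul,
          hαgt n hnN, zero_mul]
    set m₀ : BoundedContinuousFunction ℕ ℝ →L[ℝ] ℝ :=
      ∑ k ∈ Finset.range (N + 1),
        (K⁻¹ * (c k * α k)) • BoundedContinuousFunction.evalCLM ℝ (β := ℝ) k with hm₀def
    have hm₀ : ∀ f : BoundedContinuousFunction ℕ ℝ,
        m₀ f = K⁻¹ * ∑ k ∈ Finset.range (N + 1), c k * α k * f k := by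
      intro f
      rw [hm₀def, ContinuousLinearMap.sum_apply, Finset.mul_sum]
      refine Finset.sum_congr rfl fun k _ => ?_
      simp [mul_assoc]
    have hm₀mean : IsSymMean b c α m₀ := by
      constructor
      · rw [hm₀]
        have he : ∑ k ∈ Finset.range (N + 1), c k * α k * α k = K := by
          rw [hKdef]
          exact Finset.sum_congr rfl fun k _ => by ring
        rw [he, inv_mul_cancel₀ hKpos.ne']
      · intro n f Tf hT
        rw [hm₀, hm₀, hkey n f Tf hT]
        ring
    have hδ : ∀ m : BoundedContinuousFunction ℕ ℝ →L[ℝ] ℝ, IsSymMean b c α m →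
        ∀ j : ℕ, m (ind (· = j)) = c j * α j * m (ind (· = 0)) := by
      intro m hm j
      rcases Nat.eq_zero_or_pos j with h | h
      · subst h
        rw [hc0, hα0]
        ring
      · have hcj := (hcpos j).ne'
        have hT : IsSymTranslate b c j (ind (· = 0)) ((c j)⁻¹ • ind (· = j)) := by
          refine ⟨?_, ?_, ?_⟩
          · intro k hk
            simp only [BoundedContinuousFunction.coe_smul, Pi.smul_apply, ind_apply,
              smul_eq_mul]
            rw [if_neg hk, if_neg (by omega : ¬ max j k = 0), mul_zero]
          · intro h0; omega
          · intro _
            simp only [BoundedContinuousFunction.coe_smul, Pi.smul_apply, ind_apply,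
              smul_eq_mul]
            rw [if_pos trivial, if_neg (by omega : ¬ j = 0)]
            have he : ∑ k ∈ Finset.range j, (c k / c j) * (if k = 0 then (1 : ℝ) else 0)
                = c 0 / c j := by
              rw [Finset.sum_eq_single 0]
              · rw [if_pos rfl, mul_one]
              · intro k _ hk0; rw [if_neg hk0, mul_zero]
              · intro h0; exact absurd (Finset.mem_range.2 h) h0
            rw [he, hc0]
            field_simp
            ring
        have h1 := hm.2 j _ _ hT
        rw [map_smul, smul_eq_mul] at h1
        have h2 : m (ind (· = j)) = c j * ((c j)⁻¹ * m (ind (· = j))) := by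
          field_simp
        rw [h1] at h2
        rw [h2]; ring
    have hδ0 : ∀ m : BoundedContinuousFunction ℕ ℝ →L[ℝ] ℝ, IsSymMean b c α m →
        m (ind (· = 0)) = K⁻¹ := by
      intro m hm
      have hα_eq : α = ∑ k ∈ Finset.range (N + 1), α k • ind (· = k) := by
        ext j
        rw [BoundedContinuousFunction.sum_apply]
        simp only [BoundedContinuousFunction.coe_smul, Pi.smul_apply, ind_apply,
          smul_eq_mul]
        rcases le_or_gt j N with h | h
        · rw [Finset.sum_eq_single j]
          · rw [if_pos rfl, mul_one]
          · intro k _ hk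
            rw [if_neg (fun hh => hk (by omega)), mul_zero]
          · intro hj; exact absurd (Finset.mem_range.2 (by omega)) hj
        · rw [hαgt j h]
          symm
          refine Finset.sum_eq_zero fun k hk => ?_
          have hk' := Finset.mem_range.1 hk
          rw [if_neg (by omega : ¬ j = k), mul_zero]
      have h1 := hm.1
      rw [hα_eq, map_sum] at h1
      simp only [map_smul, smul_eq_mul] at h1
      have h2 : ∀ k ∈ Finset.range (N + 1),
          α k * m (ind (· = k)) = c k * α k ^ 2 * m (ind (· = 0)) := by
        intro k _
        rw [hδ m hm k]; ring
      rw [Finset.sum_congr rfl h2, ← Finset.sum_mul, ← hKdef] at h1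
      field_simp
      linarith [h1]
    refine ⟨m₀, hm₀mean, ?_⟩
    intro m' hm'
    ext f
    set g1 : BoundedContinuousFunction ℕ ℝ :=
      ∑ k ∈ Finset.range N, (f N - f k) • ind (· = k) with hg1
    set g2 : BoundedContinuousFunction ℕ ℝ :=
      ((∑ k ∈ Finset.range N, (c k / c N) * f k) - b N * f N) • ind (· = N) with hg2
    have hg1app : ∀ j : ℕ, g1 j = if j < N then f N - f j else 0 := by
      intro j
      rw [hg1, BoundedContinuousFunction.sum_apply]
      simp only [BoundedContinuousFunction.coe_smul, Pi.smul_apply, ind_apply, smul_eq_mul]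
      rcases lt_or_ge j N with h | h
      · rw [if_pos h, Finset.sum_eq_single j]
        · rw [if_pos rfl, mul_one]
        · intro k _ hk
          rw [if_neg (fun hh => hk (by omega)), mul_zero]
        · intro hj; exact absurd (Finset.mem_range.2 h) hj
      · rw [if_neg (by omega)]
        refine Finset.sum_eq_zero fun k hk => ?_
        have hk' := Finset.mem_range.1 hk
        rw [if_neg (by omega : ¬ j = k), mul_zero]
    have hg2app : ∀ j : ℕ, g2 j =
        if j = N then (∑ k ∈ Finset.range N, (c k / c N) * f k) - b N * f N else 0 := by
      intro j
      rw [hg2]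
      simp only [BoundedContinuousFunction.coe_smul, Pi.smul_apply, ind_apply, smul_eq_mul]
      rcases eq_or_ne j N with h | h
      · rw [if_pos h, if_pos h, mul_one]
      · rw [if_neg h, if_neg h, mul_zero]
    have hT : IsSymTranslate b c N f (f + g1 + g2) := by
      refine ⟨?_, ?_, ?_⟩
      · intro k hk
        simp only [BoundedContinuousFunction.coe_add, Pi.add_apply]
        rw [hg1app, hg2app, if_neg hk]
        rcases lt_or_ge k N with h | h
        · rw [if_pos h, max_eq_left h.le]; ring
        · rw [if_neg (by omega), max_eq_right (by omega)]; ring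
      · intro h0; omega
      · intro _
        simp only [BoundedContinuousFunction.coe_add, Pi.add_apply]
        rw [hg1app, hg2app, if_pos rfl, if_neg (by omega)]
        ring
    have hforce : ∀ m : BoundedContinuousFunction ℕ ℝ →L[ℝ] ℝ, IsSymMean b c α m →
        (1 + b N) * m f =
          -((∑ k ∈ Finset.range N, (f N - f k) * (c k * α k * K⁻¹)) +
            ((∑ k ∈ Finset.range N, (c k / c N) * f k) - b N * f N) * (c N * α N * K⁻¹)) := by
      intro m hm
      have h1 := hm.2 N f (f + g1 + g2) hT
      rw [hαN] at h1
      have hmg1 : m g1 = ∑ k ∈ Finset.range N, (f N - f k) * (c k * α k * K⁻¹) := by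
        rw [hg1, map_sum]
        refine Finset.sum_congr rfl fun k _ => ?_
        rw [map_smul, smul_eq_mul, hδ m hm k, hδ0 m hm]
      have hmg2 : m g2 =
          ((∑ k ∈ Finset.range N, (c k / c N) * f k) - b N * f N) * (c N * α N * K⁻¹) := by
        rw [hg2, map_smul, smul_eq_mul, hδ m hm N, hδ0 m hm]
      rw [map_add, map_add, hmg1, hmg2] at h1
      linarith [h1]
    have e1 := hforce m' hm'
    have e2 := hforce m₀ hm₀mean
    have hbN : (0 : ℝ) < 1 + b N := by have := hbpos N hN1; linarith
    have : (1 + b N) * m' f = (1 + b N) * m₀ f := by rw [e1, e2]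
    exact mul_left_cancel₀ hbN.ne' this
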